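/- Let k ≥ 3 and set c := log_k((k−1)e^k)/((k−1)·log_k(k−1)). For every sufficiently small α > 0 and every ζ > 0 there exists n_0 such that for all n ≥ n_0 the following holds. Let H = (V,E) be a k-graph on n vertices having Property 𝓔, let h be any orientation of its edges, and set T := log_{k−1} n + (c+ζ)·log_{k−1} log_{k−1} n. If v ∈ V is such that no vertex within h-distance at most T from v is free, then N_{h,T}(v) > αn. -/

import Mathlib

open Filter Real

attribute [local instance] Classical.propDecidable

/-- `x_s = log_k((k-1)e^k) / (log_k(n/s) - 1)`. -/
noncomputable def xval (k n : ℕ) (s : ℝ) : ℝ :=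
  Real.logb k (((k : ℝ) - 1) * Real.exp k) / (Real.logb k ((n : ℝ) / s) - 1)

/-- Property `𝓔` for a `k`-graph with vertex type `V` and edges indexed by `ι`. -/
def PropE {V ι : Type} [Fintype V] [DecidableEq V] [Fintype ι]
    (k : ℕ) (edges : ι → Multiset V) : Prop :=
  (∀ E' : Finset ι,
    Real.log (Real.log (Fintype.card V)) < (E'.card : ℝ) →
    (E'.card : ℝ) < (Fintype.card V : ℝ) / k →
      ((k : ℝ) - 1 - xval k (Fintype.card V) E'.card) * E'.card
        ≤ (((E'.biUnion fun i => (edges i).toFinset).card : ℕ) : ℝ)) ∧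
  (∀ E' : Finset ι, (E'.card : ℝ) ≤ Real.log (Real.log (Fintype.card V)) →
      ((k : ℝ) - 1) * E'.card
        ≤ (((E'.biUnion fun i => (edges i).toFinset).card : ℕ) : ℝ))

/-- `nset edges h v t`: vertices within `h`-distance at most `t` from `v`. -/
noncomputable def nset {V ι : Type} [Fintype V] [DecidableEq V] [Fintype ι]
    (edges : ι → Multiset V) (h : ι → V) (v : V) : ℕ → Finset V
  | 0 => {v}
  | t + 1 =>
    nset edges h v t ∪
      Finset.univ.filter (fun w : V => ∃ i : ι, h i ∈ nset edges h v t ∧ w ∈ edges i)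

/-- The constant `c = log_k((k-1)e^k) / ((k-1)·log_k(k-1))`. -/
noncomputable def cconst (k : ℕ) : ℝ :=
  Real.logb k (((k : ℝ) - 1) * Real.exp k) / (((k : ℝ) - 1) * Real.logb k ((k : ℝ) - 1))

/-- `T = log_{k-1} n + (c+ζ)·log_{k-1} log_{k-1} n`. -/
noncomputable def Tval (k : ℕ) (ζ : ℝ) (n : ℕ) : ℝ :=
  Real.logb ((k : ℝ) - 1) n +
    (cconst k + ζ) * Real.logb ((k : ℝ) - 1) (Real.logb ((k : ℝ) - 1) n)

private lemma log_sub_log_le {a b : ℝ} (hb : 0 < b) (hab : b ≤ a) :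
    Real.log a - Real.log b ≤ (a - b) / b := by
  have ha : 0 < a := lt_of_lt_of_le hb hab
  have h := Real.log_le_sub_one_of_pos (div_pos ha hb)
  rw [Real.log_div (ne_of_gt ha) (ne_of_gt hb)] at h
  have h2 : a / b - 1 = (a - b) / b := by field_simp
  linarith [h, h2.symm ▸ h]

private lemma le_log_sub_log {y y' d : ℝ} (hy' : 0 < y') (hd : 0 ≤ d) (h : y' ≤ y - d) :
    d / y ≤ Real.log y - Real.log y' := by
  have hy : 0 < y := by linarith
  have h1 : Real.log y' - Real.log y ≤ y' / y - 1 := by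
    have := Real.log_le_sub_one_of_pos (div_pos hy' hy)
    rwa [Real.log_div (ne_of_gt hy') (ne_of_gt hy)] at this
  have h2 : d / y ≤ 1 - y' / y := by
    rw [div_le_iff₀ hy]
    have h3 : (1 - y' / y) * y = y - y' := by field_simp
    rw [h3]; linarith
  linarith

private lemma tangent_bound {u v : ℝ} (hu : 0 < u) (hv : 0 < v) :
    v * Real.log v + (1 + Real.log v) * (u - v) ≤ u * Real.log u := by
  have key : 1 - v / u ≤ Real.log u - Real.log v := by
    have := Real.log_le_sub_one_of_pos (div_pos hv hu)
    rw [Real.log_div (ne_of_gt hv) (ne_of_gt hu)] at this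
    linarith
  have h1 : u * (1 - v / u) ≤ u * (Real.log u - Real.log v) :=
    mul_le_mul_of_nonneg_left key (le_of_lt hu)
  have h2 : u * (1 - v / u) = u - v := by field_simp
  have h3 : v * Real.log v + (1 + Real.log v) * (u - v)
      = (u - v) + u * Real.log v := by ring
  nlinarith [h1, h2, h3]

private lemma xval_eq (k n : ℕ) (hk : 3 ≤ k) {s : ℝ} (hs : 0 < s) (hn : 0 < n)
    (hD : Real.log n - Real.log s - Real.log k ≠ 0) :
    xval k n s = (Real.log ((k : ℝ) - 1) + k) /
      (Real.log n - Real.log s - Real.log k) := by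
  have hk1 : (1:ℝ) < (k:ℝ) := by exact_mod_cast Nat.lt_of_lt_of_le (by norm_num) hk
  have hlk : Real.log k ≠ 0 := ne_of_gt (Real.log_pos hk1)
  have hK1 : (0:ℝ) < (k:ℝ) - 1 := by linarith
  have hn' : ((n:ℝ)) ≠ 0 := by positivity
  unfold xval
  rw [Real.logb, Real.logb, Real.log_mul (ne_of_gt hK1) (Real.exp_ne_zero _),
    Real.log_exp, Real.log_div hn' (ne_of_gt hs)]
  have h4 : (Real.log n - Real.log s) / Real.log k - 1
      = (Real.log n - Real.log s - Real.log k) / Real.log k := by field_simp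
  rw [h4]
  field_simp

private lemma nset_succ {V ι : Type} [Fintype V] [DecidableEq V] [Fintype ι]
    (edges : ι → Multiset V) (h : ι → V) (v : V) (t : ℕ) :
    nset edges h v (t + 1) =
      nset edges h v t ∪
        Finset.univ.filter (fun w : V => ∃ i : ι, h i ∈ nset edges h v t ∧ w ∈ edges i) :=
  rfl

private lemma mem_nset {V ι : Type} [Fintype V] [DecidableEq V] [Fintype ι]
    (edges : ι → Multiset V) (h : ι → V) (v : V) (t : ℕ) :
    v ∈ nset edges h v t := by
  induction t with
  | zero => simp [nset]
  | succ t ih => rw [nset_succ]; exact Finset.mem_union_left _ ih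

private lemma nset_mono {V ι : Type} [Fintype V] [DecidableEq V] [Fintype ι]
    (edges : ι → Multiset V) (h : ι → V) (v : V) {s t : ℕ} (hst : s ≤ t) :
    nset edges h v s ⊆ nset edges h v t := by
  induction t with
  | zero => rw [Nat.le_zero] at hst; subst hst; exact subset_rfl
  | succ t ih =>
    rcases Nat.lt_or_ge s (t + 1) with hlt | hge
    · refine (ih (Nat.lt_succ_iff.mp hlt)).trans ?_
      rw [nset_succ]; exact Finset.subset_union_left
    · have hst' : s = t + 1 := le_antisymm hst hge
      subst hst'; exact subset_rfl

private lemma step_lemma {V ι : Type} [Fintype V] [DecidableEq V] [Fintype ι]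
    (edges : ι → Multiset V) (h : ι → V) (hinj : Function.Injective h) (v : V) (t : ℕ)
    (hocc : ∀ w ∈ nset edges h v t, ∃ i : ι, h i = w) :
    ∃ E' : Finset ι, E'.card = (nset edges h v t).card ∧
      (E'.biUnion fun i => (edges i).toFinset) ⊆ nset edges h v (t + 1) := by
  refine ⟨Finset.univ.filter (fun i => h i ∈ nset edges h v t), ?_, ?_⟩
  · apply Finset.card_bij (fun i _ => h i)
    · intro i hi; exact (Finset.mem_filter.mp hi).2
    · intro i hi j hj hij; exact hinj hij
    · intro w hw
      obtain ⟨i, hi⟩ := hocc w hw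
      exact ⟨i, Finset.mem_filter.mpr ⟨Finset.mem_univ i, by rw [hi]; exact hw⟩, hi⟩
  · intro w hw
    rw [Finset.mem_biUnion] at hw
    obtain ⟨i, hi, hwi⟩ := hw
    rw [nset_succ]
    exact Finset.mem_union_right _ (Finset.mem_filter.mpr
      ⟨Finset.mem_univ w, i, (Finset.mem_filter.mp hi).2, Multiset.mem_toFinset.mp hwi⟩)

set_option maxHeartbeats 1000000 in
/-- for `k ≥ 3`, all sufficiently small `α > 0`, all `ζ > 0` and all large
`n`: in any `k`-graph on `n` vertices with Property `𝓔`, with any orientation `h`,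
if no vertex within `h`-distance `T` of `v` is free then `N_{h,T}(v) > αn`. -/
theorem statement_7 (k : ℕ) (hk : 3 ≤ k) :
    ∃ α₀ : ℝ, 0 < α₀ ∧ ∀ α : ℝ, 0 < α → α < α₀ → ∀ ζ : ℝ, 0 < ζ →
      ∃ n₀ : ℕ, ∀ n : ℕ, n₀ ≤ n →
        ∀ (V ι : Type) [Fintype V] [DecidableEq V] [Fintype ι],
          Fintype.card V = n →
          ∀ (edges : ι → Multiset V), (∀ i, (edges i).card ≤ k) → PropE k edges →
          ∀ (h : ι → V), Function.Injective h → (∀ i, h i ∈ edges i) →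
          ∀ v : V,
            (∀ w ∈ nset edges h v ⌊Tval k ζ n⌋₊, ∃ i : ι, h i = w) →
            α * n < ((nset edges h v ⌊Tval k ζ n⌋₊).card : ℝ) := by
  have hk3 : (3:ℝ) ≤ (k:ℝ) := by exact_mod_cast hk
  have hkR : (0:ℝ) < (k:ℝ) := by linarith
  obtain ⟨K1, hK1def⟩ : ∃ z : ℝ, z = (k:ℝ) - 1 := ⟨_, rfl⟩
  have hK1_2 : (2:ℝ) ≤ K1 := by rw [hK1def]; linarith
  have hK1_pos : (0:ℝ) < K1 := by linarith
  have hlogK1 : 0 < Real.log K1 := Real.log_pos (by linarith)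
  have hlogk : 0 < Real.log k := Real.log_pos (by linarith)
  obtain ⟨B, hBdef⟩ : ∃ z : ℝ, z = Real.log K1 + k := ⟨_, rfl⟩
  have hB : 0 < B := by rw [hBdef]; linarith
  obtain ⟨c, hcdef⟩ : ∃ z : ℝ, z = B / (K1 * Real.log K1) := ⟨_, rfl⟩
  have hc : 0 < c := by rw [hcdef]; positivity
  have hcK : c * (K1 * Real.log K1) = B := by
    rw [hcdef]; exact div_mul_cancel₀ _ (by positivity)
  have hcconst : cconst k = c := by
    unfold cconst
    rw [← hK1def]
    simp only [Real.logb]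
    rw [Real.log_mul (ne_of_gt hK1_pos) (Real.exp_ne_zero _), Real.log_exp]
    rw [hcdef, hBdef]
    field_simp
  refine ⟨min (1/(2*(k:ℝ))) (Real.exp (-(Real.log k + 2*B/(K1-1)))), by positivity, ?_⟩
  intro α hα hαlt ζ hζ
  obtain ⟨c', hc'def⟩ : ∃ z : ℝ, z = c + ζ/2 := ⟨_, rfl⟩
  have hc' : 0 < c' := by rw [hc'def]; linarith
  obtain ⟨δ, hδdef⟩ : ∃ z : ℝ, z = ζ / (8*c) := ⟨_, rfl⟩
  have hδ : 0 < δ := by rw [hδdef]; positivity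
  obtain ⟨ε, hεdef⟩ : ∃ z : ℝ,
      z = min ((K1-1)/2) ((3*ζ/8) * (K1*Real.log K1) / (c' * (1+Real.log K1))) := ⟨_, rfl⟩
  have hε : 0 < ε := by rw [hεdef]; exact lt_min (by linarith) (by positivity)
  have hεle : ε ≤ (K1-1)/2 := by rw [hεdef]; exact min_le_left _ _
  have hK1ε1 : (1:ℝ) < K1 - ε := by linarith
  have hεkey : B * (1+δ) ≤ c' * ((K1-ε) * Real.log (K1-ε)) := by
    have ht := tangent_bound (u := K1-ε) (v := K1) (by linarith) hK1_pos
    have h1 : c' * (K1 * Real.log K1 + (1+Real.log K1)*((K1-ε) - K1))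
        ≤ c' * ((K1-ε)*Real.log (K1-ε)) := mul_le_mul_of_nonneg_left ht (le_of_lt hc')
    have h2 : ε * (c' * (1+Real.log K1)) ≤ (3*ζ/8) * (K1*Real.log K1) := by
      have h3 : ε ≤ (3*ζ/8) * (K1*Real.log K1) / (c' * (1+Real.log K1)) := by
        rw [hεdef]; exact min_le_right _ _
      rw [le_div_iff₀ (by positivity)] at h3
      linarith
    have h3 : B * δ = (ζ/8) * (K1 * Real.log K1) := by
      rw [hδdef, ← hcK]
      field_simp
    have h4 : c' * (K1 * Real.log K1) = B + (ζ/2) * (K1 * Real.log K1) := by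
      rw [hc'def, add_mul, hcK]
    have heq : c' * (K1 * Real.log K1 + (1+Real.log K1)*((K1-ε) - K1))
        = c' * (K1 * Real.log K1) - ε * (c' * (1+Real.log K1)) := by ring
    rw [heq] at h1
    have h5 : B * (1+δ) = B + B * δ := by ring
    linarith only [h1, h2, h3, h4, h5]
  obtain ⟨μ0, hμ0def⟩ : ∃ z : ℝ, z = Real.log ((k:ℝ)/2) := ⟨_, rfl⟩
  have hμ0 : 0 < μ0 := by
    rw [hμ0def]
    exact Real.log_pos (by rw [lt_div_iff₀ (by norm_num : (0:ℝ) < 2)]; linarith)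
  have hμ0le : μ0 ≤ Real.log K1 := by
    rw [hμ0def]
    exact Real.log_le_log (by positivity) (by rw [hK1def]; linarith)
  obtain ⟨r, hrdef⟩ : ∃ z : ℝ, z = Real.log K1 / μ0 := ⟨_, rfl⟩
  have hr1 : 1 ≤ r := by rw [hrdef]; exact (le_div_iff₀ hμ0).mpr (by linarith)
  have hr0 : 0 ≤ r := by linarith
  have hrμ : r * μ0 = Real.log K1 := by
    rw [hrdef]; exact div_mul_cancel₀ _ (ne_of_gt hμ0)
  obtain ⟨Y1, hY1def⟩ : ∃ z : ℝ,
      z = max (Real.log k * (1+δ)/δ) (max (B/ε + Real.log k) (Real.log k + 1)) := ⟨_, rfl⟩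
  have hY1c : Real.log k + 1 ≤ Y1 := by
    rw [hY1def]; exact le_trans (le_max_right _ _) (le_max_right _ _)
  have hY1_1 : 1 ≤ Y1 := by linarith
  have hY1a : Real.log k * (1+δ)/δ ≤ Y1 := by rw [hY1def]; exact le_max_left _ _
  have hY1b : B/ε + Real.log k ≤ Y1 := by
    rw [hY1def]; exact le_trans (le_max_left _ _) (le_max_right _ _)
  -- the key analytic inequality in the "high" regime
  have hhigh : ∀ x yv : ℝ, 0 ≤ x → x ≤ ε → x * (yv - Real.log k) ≤ B → Y1 ≤ yv →
      Real.log K1 ≤ Real.log (K1 - x) + c' * Real.log (K1 - x) / yv := by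
    intro x yv hx0 hxε hxB hYy
    have hyv : 0 < yv := by linarith
    have hylk0 : 0 < yv - Real.log k := by linarith
    have hKx : 0 < K1 - x := by linarith
    have hKε : 0 < K1 - ε := by linarith
    have hlKε : 0 < Real.log (K1 - ε) := Real.log_pos hK1ε1
    have hlKεx : Real.log (K1-ε) ≤ Real.log (K1-x) := Real.log_le_log hKε (by linarith)
    have hA : Real.log K1 - Real.log (K1-x) ≤ x / (K1-ε) := by
      have h1 := log_sub_log_le hKx (by linarith : K1 - x ≤ K1)
      have h2 : (K1 - (K1-x)) = x := by ring
      rw [h2] at h1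
      have h3 : x / (K1-x) ≤ x / (K1-ε) := div_le_div_of_nonneg_left hx0 hKε (by linarith)
      linarith only [h1, h3]
    have hyk : yv ≤ (1+δ) * (yv - Real.log k) := by
      have h1 : Real.log k * (1+δ) ≤ yv * δ := by
        have h2 := (div_le_iff₀ hδ).mp (le_trans hY1a hYy)
        linarith
      have hexp : (1+δ) * (yv - Real.log k)
          = yv - Real.log k * (1+δ) + yv * δ := by ring
      rw [hexp]
      linarith only [h1]
    have hxyv : x * yv ≤ B * (1+δ) := by
      calc x * yv ≤ x * ((1+δ) * (yv - Real.log k)) :=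
            mul_le_mul_of_nonneg_left hyk hx0
        _ = (1+δ) * (x * (yv - Real.log k)) := by ring
        _ ≤ (1+δ) * B := mul_le_mul_of_nonneg_left hxB (by positivity)
        _ = B * (1+δ) := by ring
    have h6 : x * yv ≤ c' * Real.log (K1-ε) * (K1-ε) := by
      have heq : c' * ((K1-ε) * Real.log (K1-ε)) = c' * Real.log (K1-ε) * (K1-ε) := by ring
      rw [← heq]
      linarith only [hεkey, hxyv]
    have hC : x / (K1-ε) ≤ c' * Real.log (K1-ε) / yv := (div_le_div_iff₀ hKε hyv).mpr h6
    have hB2 : c' * Real.log (K1-ε) / yv ≤ c' * Real.log (K1-x) / yv := by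
      gcongr
    linarith only [hA, hC, hB2]
  -- choice of n₀
  have hlogtend : Tendsto (fun n : ℕ => Real.log n) atTop atTop :=
    Real.tendsto_log_atTop.comp tendsto_natCast_atTop_atTop
  have hlltend : Tendsto (fun n : ℕ => Real.log (Real.log n)) atTop atTop :=
    Real.tendsto_log_atTop.comp hlogtend
  obtain ⟨M2, hM2def⟩ : ∃ z : ℝ,
      z = r*Y1 + (c+ζ)*|Real.log (Real.log K1)| + 2*Real.log K1 := ⟨_, rfl⟩
  have hev : ∀ᶠ n : ℕ in atTop,
      3 ≤ n ∧ Y1 ≤ Real.log n ∧ M2 < (ζ/2) * Real.log (Real.log n) := by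
    filter_upwards [eventually_ge_atTop 3, hlogtend.eventually_ge_atTop Y1,
      (hlltend.const_mul_atTop (show (0:ℝ) < ζ/2 by positivity)).eventually_gt_atTop M2]
      with n h1 h2 h3
    exact ⟨h1, h2, h3⟩
  obtain ⟨n₀, hn₀⟩ := eventually_atTop.mp hev
  refine ⟨n₀, ?_⟩
  intro n hn V ι _ _ _ hcard edges hedgecard hPropE h hinj hmem v hocc
  obtain ⟨hn3, hY1logn, hM2lt⟩ := hn₀ n hn
  by_contra hcon
  push_neg at hcon
  set T : ℕ := ⌊Tval k ζ n⌋₊ with hTdef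
  obtain ⟨L, hLdef⟩ : ∃ z : ℝ, z = Real.log (Real.log n) := ⟨_, rfl⟩
  have hnR : (0:ℝ) < n := by exact_mod_cast (by omega : 0 < n)
  have hlogn : 0 < Real.log n := by linarith
  obtain ⟨Nr, hNrdef⟩ : ∃ f : ℕ → ℝ, f = fun t => ((nset edges h v t).card : ℝ) := ⟨_, rfl⟩
  have hNr1 : ∀ t, 1 ≤ Nr t := by
    intro t
    have h1 : 0 < (nset edges h v t).card :=
      Finset.card_pos.mpr ⟨v, mem_nset edges h v t⟩
    simp only [hNrdef]
    exact_mod_cast h1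
  have hNrpos : ∀ t, 0 < Nr t := fun t => lt_of_lt_of_le zero_lt_one (hNr1 t)
  have hNmono : ∀ s t : ℕ, s ≤ t → Nr s ≤ Nr t := by
    intro s t hst
    simp only [hNrdef]
    exact_mod_cast Finset.card_le_card (nset_mono edges h v hst)
  have hNT : Nr T ≤ α * n := by simp only [hNrdef]; exact hcon
  have hNle : ∀ t, t ≤ T → Nr t ≤ α * n := fun t ht => le_trans (hNmono t T ht) hNT
  obtain ⟨y, hydef⟩ : ∃ f : ℕ → ℝ, f = fun t => Real.log n - Real.log (Nr t) := ⟨_, rfl⟩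
  have hlogα : Real.log α < -(Real.log k + 2*B/(K1-1)) := by
    have h1 : α < Real.exp (-(Real.log k + 2*B/(K1-1))) :=
      lt_of_lt_of_le hαlt (min_le_right _ _)
    calc Real.log α < Real.log (Real.exp (-(Real.log k + 2*B/(K1-1)))) :=
          Real.log_lt_log hα h1
      _ = _ := Real.log_exp _
  have hy_lb : ∀ t, t ≤ T → Real.log k + 2*B/(K1-1) ≤ y t := by
    intro t ht
    have h1 : Real.log (Nr t) ≤ Real.log (α * n) := Real.log_le_log (hNrpos t) (hNle t ht)
    rw [Real.log_mul (ne_of_gt hα) (ne_of_gt hnR)] at h1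
    simp only [hydef]
    linarith only [h1, hlogα]
  have hy_pos : ∀ t, t ≤ T → 0 < y t := by
    intro t ht
    have h1 := hy_lb t ht
    have h2 : 0 < 2*B/(K1-1) := div_pos (by linarith) (by linarith)
    linarith only [h1, h2, hlogk]
  -- the combinatorial/expansion step
  have hstep : ∀ t, t < T → ∃ x : ℝ, 0 ≤ x ∧ x ≤ (K1-1)/2 ∧
      (Y1 ≤ y t → x ≤ ε) ∧ x * (y t - Real.log k) ≤ B ∧
      (K1 - x) * Nr t ≤ Nr (t+1) := by
    intro t ht
    obtain ⟨E', hEcard, hEsub⟩ := step_lemma edges h hinj v t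
      (fun w hw => hocc w (nset_mono edges h v (le_of_lt ht) hw))
    have hEc : (E'.card : ℝ) = Nr t := by
      simp only [hNrdef]; exact_mod_cast hEcard
    have hbi : ((E'.biUnion fun i => (edges i).toFinset).card : ℝ) ≤ Nr (t+1) := by
      simp only [hNrdef]
      exact_mod_cast Finset.card_le_card hEsub
    obtain ⟨hP1, hP2⟩ := hPropE
    rw [hcard] at hP1 hP2
    by_cases hphase : Nr t ≤ L
    · refine ⟨0, le_refl 0, by linarith, fun _ => le_of_lt hε, by rw [zero_mul]; exact hB.le, ?_⟩
      have h1 := hP2 E' (by rw [hEc, ← hLdef]; exact hphase)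
      rw [hEc, ← hK1def] at h1
      simpa using le_trans h1 hbi
    · push_neg at hphase
      have hD : 0 < y t - Real.log k := by
        have h1 := hy_lb t (le_of_lt ht)
        have h2 : 0 < 2*B/(K1-1) := div_pos (by linarith) (by linarith)
        linarith only [h1, h2]
      have hDge : 2*B/(K1-1) ≤ y t - Real.log k := by
        have h1 := hy_lb t (le_of_lt ht)
        linarith only [h1, hlogk]
      have hcardlt : (E'.card : ℝ) < (n:ℝ)/k := by
        rw [hEc]
        have h1 : α < 1/(2*(k:ℝ)) := lt_of_lt_of_le hαlt (min_le_left _ _)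
        have h2 : α * (2*(k:ℝ)) < 1 := (lt_div_iff₀ (by positivity)).mp h1
        rw [lt_div_iff₀ hkR]
        have h3 : Nr t * k ≤ (α * n) * k :=
          mul_le_mul_of_nonneg_right (hNle t (le_of_lt ht)) (le_of_lt hkR)
        have h4 : (α*(2*(k:ℝ)))*((n:ℝ)/2) < 1*((n:ℝ)/2) :=
          mul_lt_mul_of_pos_right h2 (by positivity)
        have h5 : (α * (n:ℝ)) * k = (α*(2*(k:ℝ)))*((n:ℝ)/2) := by ring
        linarith only [h3, h4, h5, hnR]
      have h1 := hP1 E' (by rw [hEc, ← hLdef]; exact hphase) hcardlt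
      rw [hEc, ← hK1def] at h1
      have hyeq : y t - Real.log k = Real.log n - Real.log (Nr t) - Real.log k := by
        simp only [hydef]
      have hxeq : xval k n (Nr t) = B / (y t - Real.log k) := by
        rw [xval_eq k n hk (hNrpos t) (by omega) (by rw [← hyeq]; exact ne_of_gt hD)]
        rw [← hK1def, ← hBdef, ← hyeq]
      obtain ⟨x, hxdef⟩ : ∃ z : ℝ, z = B / (y t - Real.log k) := ⟨_, rfl⟩
      have hx0 : 0 ≤ x := by rw [hxdef]; exact le_of_lt (div_pos hB hD)
      have hxD : x * (y t - Real.log k) = B := by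
        rw [hxdef]; exact div_mul_cancel₀ _ (ne_of_gt hD)
      have hxhalf : x ≤ (K1-1)/2 := by
        have h2 : x * (2*B/(K1-1)) ≤ B := by
          linarith only [mul_le_mul_of_nonneg_left hDge hx0, hxD]
        have h3 : 0 < 2*B/(K1-1) := div_pos (by linarith) (by linarith)
        have h4 : x ≤ B / (2*B/(K1-1)) := (le_div_iff₀ h3).mpr h2
        have h5 : B / (2*B/(K1-1)) = (K1-1)/2 := by
          field_simp
        linarith only [h4, h5]
      refine ⟨x, hx0, hxhalf, ?_, le_of_eq hxD, ?_⟩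
      · intro hY
        have h2 : B/ε ≤ y t - Real.log k := by linarith only [hY1b, hY, hlogk]
        have h3 : x * (B/ε) ≤ B := by
          linarith only [mul_le_mul_of_nonneg_left h2 hx0, hxD]
        have h4 : x * B ≤ ε * B := by
          have h5 : x * (B/ε) * ε = x * B := by field_simp
          linarith only [mul_le_mul_of_nonneg_right h3 (le_of_lt hε), h5]
        exact le_of_mul_le_mul_right h4 hB
      · rw [hxeq, ← hxdef] at h1
        exact le_trans h1 hbi
  -- the potential function
  obtain ⟨phi, hphidef⟩ : ∃ f : ℝ → ℝ,
      f = fun z => max z Y1 + c' * Real.log (max z Y1) - r * max (Y1 - z) 0 := ⟨_, rfl⟩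
  have hphi_hi : ∀ z, Y1 ≤ z → phi z = z + c' * Real.log z := by
    intro z hz
    simp only [hphidef]
    rw [max_eq_left hz, max_eq_right (by linarith : Y1 - z ≤ 0)]
    ring
  have hphi_lo : ∀ z, z < Y1 → phi z = Y1 + c' * Real.log Y1 - r * (Y1 - z) := by
    intro z hz
    simp only [hphidef]
    rw [max_eq_right (le_of_lt hz), max_eq_left (by linarith : (0:ℝ) ≤ Y1 - z)]
  -- main induction
  have main : ∀ t, t ≤ T →
      phi (y t) + (t:ℝ) * Real.log K1 ≤ phi (y 0) + (if y t < Y1 then Real.log K1 else 0) := by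
    intro t
    induction t with
    | zero =>
      intro _
      split_ifs
      · simp; linarith
      · simp
    | succ t ih =>
      intro ht1
      have ih' := ih (by omega)
      obtain ⟨x, hx0, hxhalf, hxε, hxB, hxstep⟩ := hstep t (by omega)
      obtain ⟨d, hddef⟩ : ∃ z : ℝ, z = Real.log (K1 - x) := ⟨_, rfl⟩
      have hKx : (k:ℝ)/2 ≤ K1 - x := by rw [hK1def] at hxhalf ⊢; linarith only [hxhalf]
      have hKxpos : 0 < K1 - x := by linarith
      have hd_lb : μ0 ≤ d := by
        rw [hμ0def, hddef]
        exact Real.log_le_log (by positivity) hKx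
      have hd_pos : 0 < d := lt_of_lt_of_le hμ0 hd_lb
      have hy'pos : 0 < y (t+1) := hy_pos (t+1) ht1
      have hyy : y (t+1) ≤ y t - d := by
        have h1 : Real.log ((K1-x) * Nr t) ≤ Real.log (Nr (t+1)) :=
          Real.log_le_log (mul_pos hKxpos (hNrpos t)) hxstep
        rw [Real.log_mul (ne_of_gt hKxpos) (ne_of_gt (hNrpos t))] at h1
        simp only [hydef, hddef]
        linarith only [h1]
      push_cast
      by_cases hcase1 : Y1 ≤ y (t+1)
      · have hcase0 : Y1 ≤ y t := by linarith
        rw [if_neg (not_lt.mpr hcase1)]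
        rw [if_neg (not_lt.mpr hcase0)] at ih'
        have hkey := hhigh x (y t) hx0 (hxε hcase0) hxB hcase0
        rw [← hddef] at hkey
        have hlogdiff : d / y t ≤ Real.log (y t) - Real.log (y (t+1)) :=
          le_log_sub_log hy'pos (le_of_lt hd_pos) hyy
        have h7 : c' * d / y t ≤ c' * (Real.log (y t) - Real.log (y (t+1))) := by
          rw [mul_div_assoc]
          exact mul_le_mul_of_nonneg_left hlogdiff (le_of_lt hc')
        rw [hphi_hi _ hcase1]
        rw [hphi_hi _ hcase0] at ih'
        linarith only [ih', hkey, h7, hyy]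
      · push_neg at hcase1
        rw [if_pos hcase1]
        by_cases hcase2 : Y1 ≤ y t
        · rw [if_neg (not_lt.mpr hcase2)] at ih'
          have h8 : phi (y (t+1)) ≤ phi (y t) := by
            rw [hphi_lo _ hcase1, hphi_hi _ hcase2]
            have h9 : Real.log Y1 ≤ Real.log (y t) :=
              Real.log_le_log (by linarith) hcase2
            have h10 : 0 ≤ r * (Y1 - y (t+1)) := mul_nonneg hr0 (by linarith)
            linarith only [mul_le_mul_of_nonneg_left h9 (le_of_lt hc'), h10, hcase2]
          linarith only [ih', h8]
        · push_neg at hcase2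
          rw [if_pos hcase2] at ih'
          have h9 : Real.log K1 ≤ r * (y t - y (t+1)) := by
            have h10 : μ0 ≤ y t - y (t+1) := by linarith
            calc Real.log K1 = r * μ0 := hrμ.symm
              _ ≤ r * (y t - y (t+1)) := mul_le_mul_of_nonneg_left h10 hr0
          rw [hphi_lo _ hcase1]
          rw [hphi_lo _ hcase2] at ih'
          linarith only [ih', h9]
  -- conclusion
  have hy0 : y 0 = Real.log n := by
    simp only [hydef, hNrdef]
    norm_num [nset]
  have hfin := main T le_rfl
  have hphiy0 : phi (y 0) = Real.log n + c' * Real.log (Real.log n) := by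
    rw [hy0, hphi_hi _ hY1logn]
  have hphiyT : Y1 - r * Y1 ≤ phi (y T) := by
    simp only [hphidef]
    have h1 : Y1 ≤ max (y T) Y1 := le_max_right _ _
    have h2 : 0 ≤ Real.log (max (y T) Y1) := Real.log_nonneg (by linarith)
    have h3 : max (Y1 - y T) 0 ≤ Y1 :=
      max_le (by linarith only [hy_pos T le_rfl, hY1_1]) (by linarith only [hY1_1])
    linarith only [mul_le_mul_of_nonneg_left h3 hr0, mul_nonneg (le_of_lt hc') h2, h1]
  have hite : (if y T < Y1 then Real.log K1 else 0) ≤ Real.log K1 := by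
    split_ifs
    · exact le_rfl
    · exact le_of_lt hlogK1
  have hTval : Real.log n + (c+ζ)*(L - Real.log (Real.log K1)) - Real.log K1
      ≤ (T:ℝ) * Real.log K1 := by
    have h1 : Tval k ζ n - 1 < (T:ℝ) := Nat.sub_one_lt_floor _
    have h2 : Tval k ζ n * Real.log K1
        = Real.log n + (c+ζ)*(L - Real.log (Real.log K1)) := by
      unfold Tval
      rw [hcconst, ← hK1def, hLdef]
      simp only [Real.logb]
      rw [Real.log_div (ne_of_gt hlogn) (ne_of_gt hlogK1)]
      field_simp
    have h3 : (Tval k ζ n - 1) * Real.log K1 ≤ (T:ℝ) * Real.log K1 :=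
      mul_le_mul_of_nonneg_right (le_of_lt h1) (le_of_lt hlogK1)
    have h4 : (Tval k ζ n - 1) * Real.log K1 = Tval k ζ n * Real.log K1 - Real.log K1 := by
      ring
    linarith only [h2, h3, h4]
  have habs : (c+ζ) * Real.log (Real.log K1) ≤ (c+ζ) * |Real.log (Real.log K1)| :=
    mul_le_mul_of_nonneg_left (le_abs_self _) (by linarith)
  rw [hM2def] at hM2lt
  have hY1nn : 0 ≤ Y1 := by linarith
  rw [hphiy0] at hfin
  rw [← hLdef] at hfin hM2lt
  have hc'L : c' * L = c * L + ζ/2 * L := by rw [hc'def]; ring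
  linarith only [hfin, hphiyT, hite, hTval, habs, hM2lt, hc'L, hY1nn, hlogK1]
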